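/- In F_2[x_1,x_2] with GL_2(F_2) acting by linear substitution, the image e_2 · (x_1 x_2 · F_2[x_1,x_2]) of the ideal generated by x_1 x_2 under the Steinberg idempotent e_2 = B̄_2 Σ̄_2 equals ω_2 · (e_2 · F_2[x_1,x_2]), where ω_2 = x_1 x_2 (x_1 + x_2). -/
import Mathlib


open MvPolynomial

/-- The action of the Steinberg idempotent `e₂ = B̄₂ Σ̄₂ = 1 + s + u + us` on
`F₂[x₁,x₂]`, where `s` swaps the variables and `u` is `x₂ ↦ x₁ + x₂`. -/
noncomputable def steinbergAct (f : MvPolynomial (Fin 2) (ZMod 2)) :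
    MvPolynomial (Fin 2) (ZMod 2) :=
  f + MvPolynomial.aeval ![X 1, X 0] f + MvPolynomial.aeval ![X 0, X 0 + X 1] f +
    MvPolynomial.aeval ![X 0 + X 1, X 0] f

private abbrev R2 : Type := MvPolynomial (Fin 2) (ZMod 2)

private lemma h2 : (2 : R2) = 0 := by
  have : ((2 : ℕ) : R2) = 0 := CharP.cast_eq_zero R2 2
  simpa using this

private lemma comp_vec (v w t : Fin 2 → R2) (h : ∀ i, aeval v (w i) = t i)
    (f : R2) : aeval v (aeval w f) = aeval t f := by
  have hc : ((aeval v : R2 →ₐ[ZMod 2] R2)).comp (aeval w : R2 →ₐ[ZMod 2] R2) = (aeval t : R2 →ₐ[ZMod 2] R2) := by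
    rw [comp_aeval]
    exact congrArg _ (funext h)
  calc aeval v (aeval w f) = (((aeval v : R2 →ₐ[ZMod 2] R2)).comp (aeval w : R2 →ₐ[ZMod 2] R2)) f := rfl
    _ = aeval t f := by rw [hc]

-- compositions, outer-inner; vectors: A = ![X1,X0], B = ![X0,X0+X1], C = ![X0+X1,X0],
-- D = ![X1,X0+X1], E = ![X0+X1,X1]
private lemma cAA (f : R2) : aeval ![(X 1 : R2), X 0] (aeval ![(X 1 : R2), X 0] f) = f := by
  rw [comp_vec ![(X 1 : R2), X 0] ![(X 1 : R2), X 0] (fun i => X i) (by intro i; fin_cases i <;> simp) f]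
  exact aeval_X_left_apply f

private lemma cAB (f : R2) :
    aeval ![(X 1 : R2), X 0] (aeval ![(X 0 : R2), X 0 + X 1] f) = aeval ![(X 1 : R2), X 0 + X 1] f := by
  refine comp_vec _ _ _ (by intro i; fin_cases i <;> simp [add_comm]) f

private lemma cAC (f : R2) :
    aeval ![(X 1 : R2), X 0] (aeval ![(X 0 + X 1 : R2), X 0] f) = aeval ![(X 0 + X 1 : R2), X 1] f := by
  refine comp_vec _ _ _ (by intro i; fin_cases i <;> simp [add_comm]) f

private lemma cBA (f : R2) :
    aeval ![(X 0 : R2), X 0 + X 1] (aeval ![(X 1 : R2), X 0] f) = aeval ![(X 0 + X 1 : R2), X 0] f := by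
  refine comp_vec _ _ _ (by intro i; fin_cases i <;> simp) f

private lemma cBB (f : R2) : aeval ![(X 0 : R2), X 0 + X 1] (aeval ![(X 0 : R2), X 0 + X 1] f) = f := by
  rw [comp_vec ![(X 0 : R2), X 0 + X 1] ![(X 0 : R2), X 0 + X 1] (fun i => X i)
    (by intro i; fin_cases i <;> (simp; try linear_combination (X 0 : R2) * h2)) f]
  exact aeval_X_left_apply f

private lemma cBC (f : R2) :
    aeval ![(X 0 : R2), X 0 + X 1] (aeval ![(X 0 + X 1 : R2), X 0] f) = aeval ![(X 1 : R2), X 0] f := by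
  refine comp_vec _ _ _ (by intro i; fin_cases i <;>
    (simp; try linear_combination (X 0 : R2) * h2)) f

private lemma cCA (f : R2) :
    aeval ![(X 0 + X 1 : R2), X 0] (aeval ![(X 1 : R2), X 0] f) = aeval ![(X 0 : R2), X 0 + X 1] f := by
  refine comp_vec _ _ _ (by intro i; fin_cases i <;> simp) f

private lemma cCB (f : R2) :
    aeval ![(X 0 + X 1 : R2), X 0] (aeval ![(X 0 : R2), X 0 + X 1] f) = aeval ![(X 0 + X 1 : R2), X 1] f := by
  refine comp_vec _ _ _ (by intro i; fin_cases i <;>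
    (simp; try linear_combination (X 0 : R2) * h2)) f

private lemma cCC (f : R2) :
    aeval ![(X 0 + X 1 : R2), X 0] (aeval ![(X 0 + X 1 : R2), X 0] f) = aeval ![(X 1 : R2), X 0 + X 1] f := by
  refine comp_vec _ _ _ (by intro i; fin_cases i <;>
    (simp; try linear_combination (X 0 : R2) * h2)) f

private lemma idem (f : R2) : steinbergAct (steinbergAct f) = steinbergAct f := by
  simp only [steinbergAct, map_add, cAA, cAB, cAC, cBA, cBB, cBC, cCA, cCB, cCC]
  linear_combination (f + aeval ![(X 1 : R2), X 0] f + aeval ![(X 0 : R2), X 0 + X 1] f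
    + aeval ![(X 0 + X 1 : R2), X 0] f + aeval ![(X 1 : R2), X 0 + X 1] f
    + aeval ![(X 0 + X 1 : R2), X 1] f) * h2

private lemma sw_inv (f : R2) :
    steinbergAct ((X 0 * X 1 * (X 0 + X 1)) * f)
      = (X 0 * X 1 * (X 0 + X 1)) * steinbergAct f := by
  simp only [steinbergAct, map_mul, map_add, aeval_X, Matrix.cons_val_zero,
    Matrix.cons_val_one, Matrix.head_cons]
  linear_combination (X 0 ^ 2 * (X 0 + X 1)
    * (aeval ![(X 0 : R2), X 0 + X 1] f + aeval ![(X 0 + X 1 : R2), X 0] f)) * h2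

private lemma div2 (g : R2) : ∃ k : R2, g + aeval ![(X 1 : R2), X 0] g = (X 0 + X 1) * k := by
  induction g using MvPolynomial.induction_on with
  | C a =>
      refine ⟨0, ?_⟩
      rw [aeval_C, mul_zero, algebraMap_eq]
      linear_combination h2 * (C a : R2)
  | add p q hp hq =>
      obtain ⟨kp, hkp⟩ := hp
      obtain ⟨kq, hkq⟩ := hq
      exact ⟨kp + kq, by rw [map_add]; linear_combination hkp + hkq⟩
  | mul_X p n hp =>
      obtain ⟨k, hk⟩ := hp
      fin_cases n
      · refine ⟨k * X 0 + aeval ![(X 1 : R2), X 0] p, ?_⟩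
        rw [map_mul, aeval_X]
        simp only [Fin.isValue, Matrix.cons_val_zero, Matrix.cons_val_one, Matrix.head_cons,
          Fin.mk_zero, Fin.mk_one]
        linear_combination X 0 * hk - X 0 * aeval ![(X 1 : R2), X 0] p * h2
      · refine ⟨k * X 1 + aeval ![(X 1 : R2), X 0] p, ?_⟩
        rw [map_mul, aeval_X]
        simp only [Fin.isValue, Matrix.cons_val_zero, Matrix.cons_val_one, Matrix.head_cons,
          Fin.mk_zero, Fin.mk_one]
        linear_combination X 1 * hk - X 1 * aeval ![(X 1 : R2), X 0] p * h2

/-- `e₂ · (x₁x₂ · F₂[x₁,x₂]) = ω₂ · (e₂ · F₂[x₁,x₂])` where `ω₂ = x₁x₂(x₁+x₂)`. -/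
theorem stmt17 :
    (Set.range fun g : MvPolynomial (Fin 2) (ZMod 2) => steinbergAct (X 0 * X 1 * g)) =
      Set.range fun g : MvPolynomial (Fin 2) (ZMod 2) =>
        (X 0 * X 1 * (X 0 + X 1)) * steinbergAct g := by
  ext f
  simp only [Set.mem_range]
  constructor
  · rintro ⟨g, rfl⟩
    obtain ⟨k, hk⟩ := div2 g
    have hk' : aeval ![(X 0 : R2), X 0 + X 1] g
        + aeval ![(X 0 : R2), X 0 + X 1] (aeval ![(X 1 : R2), X 0] g)
        = (X 0 + (X 0 + X 1)) * aeval ![(X 0 : R2), X 0 + X 1] k := by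
      have := congrArg (aeval ![(X 0 : R2), X 0 + X 1]) hk
      simpa only [map_add, map_mul, aeval_X, Matrix.cons_val_zero, Matrix.cons_val_one,
        Matrix.head_cons] using this
    have hE : steinbergAct (X 0 * X 1 * g)
        = (X 0 * X 1 * (X 0 + X 1)) * (k + aeval ![(X 0 : R2), X 0 + X 1] k) := by
      simp only [steinbergAct, map_mul, map_add, aeval_X, Matrix.cons_val_zero,
        Matrix.cons_val_one, Matrix.head_cons]
      rw [← cBA g]
      linear_combination (X 0 * X 1) * hk + (X 0 * (X 0 + X 1)) * hk'
        + (X 0 ^ 2 * (X 0 + X 1) * aeval ![(X 0 : R2), X 0 + X 1] k) * h2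
    refine ⟨k + aeval ![(X 0 : R2), X 0 + X 1] k, ?_⟩
    calc (X 0 * X 1 * (X 0 + X 1)) * steinbergAct (k + aeval ![(X 0 : R2), X 0 + X 1] k)
        = steinbergAct ((X 0 * X 1 * (X 0 + X 1)) * (k + aeval ![(X 0 : R2), X 0 + X 1] k)) :=
          (sw_inv _).symm
      _ = steinbergAct (steinbergAct (X 0 * X 1 * g)) := by rw [← hE]
      _ = steinbergAct (X 0 * X 1 * g) := idem _
  · rintro ⟨g, rfl⟩
    refine ⟨(X 0 + X 1) * g, ?_⟩
    rw [show X 0 * X 1 * ((X 0 + X 1) * g) = (X 0 * X 1 * (X 0 + X 1)) * g by ring,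
      sw_inv]
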